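/- Let q be a conservative Q-function satisfying Assumption L1. Then for every n ≥ 1, u ∈ [T₀,T₁), t ∈ (u,T₁), x ∈ X, and B ∈ 𝓑(X), the functions P̄⁽ⁿ⁾ defined by the backward recursion also satisfy the forward recursion: P̄⁽ⁿ⁾(u,x;t,B) = ∫_u^t ∫_X ∫_B exp(−∫_w^t q(y,θ)dθ) q(z,w,dy∖{z}) P̄⁽ⁿ⁻¹⁾(u,x;w,dz) dw. -/

import Mathlib

open MeasureTheory Set Filter Topology
open scoped ENNReal

noncomputable section

/-- A conservative `Q`-function on the state space `X` with time horizon `[T₀, T₁)`,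
`T₁ ≤ +∞`.  It is encoded by the kernel `qp x t = q(x, t, · \ {x})`; since `q` is
conservative, the signed measure `q(x,t,·)` is recovered as
`q(x,t,B) = qp x t B - qp x t univ · 1{x ∈ B}`, so that `q(x,t,X) = 0`. -/
structure ConsQFun (X : Type*) [MeasurableSpace X] (T₀ : ℝ) (T₁ : EReal) where
  qp : X → ℝ → Measure X
  fin : ∀ x t, qp x t Set.univ ≠ ⊤
  diag : ∀ x t, qp x t {x} = 0
  meas : ∀ B : Set X, MeasurableSet B → Measurable fun p : X × ℝ => qp p.1 p.2 B

namespace ConsQFun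

variable {X : Type*} [MeasurableSpace X] {T₀ : ℝ} {T₁ : EReal}

/-- The jump rate `q(x,t) = q(x, t, X \ {x})`, as a real number. -/
def qrate (Q : ConsQFun X T₀ T₁) (x : X) (t : ℝ) : ℝ := (Q.qp x t Set.univ).toReal

/-- `q̄(x) = sup_{t ∈ [T₀,T₁)} q(x,t)`, computed in `ℝ≥0∞`. -/
def qbar (Q : ConsQFun X T₀ T₁) (x : X) : ℝ≥0∞ :=
  ⨆ t ∈ {t : ℝ | T₀ ≤ t ∧ (t : EReal) < T₁}, Q.qp x t Set.univ

/-- Assumption (Feller): there are Borel sets `Bₙ ↑ X` with `sup_{x ∈ Bₙ} q̄(x) < n`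
(for `n = 1, 2, …`; here reindexed by `n ↦ n + 1`). -/
def AssumptionFeller (Q : ConsQFun X T₀ T₁) : Prop :=
  ∃ B : ℕ → Set X, (∀ n, MeasurableSet (B n)) ∧ (∀ n, B n ⊆ B (n + 1)) ∧
    (⋃ n, B n) = Set.univ ∧ ∀ n : ℕ, (⨆ x ∈ B n, Q.qbar x) < (n : ℝ≥0∞) + 1

/-- Assumption (LB): `q̄(x) < ∞` for every `x`. -/
def AssumptionLB (Q : ConsQFun X T₀ T₁) : Prop := ∀ x, Q.qbar x < ⊤

/-- Assumption (ALB): `sup_{t ∈ [T₀,s)} q(x,t) < ∞` for every `x` and `s ∈ (T₀,T₁)`. -/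
def AssumptionALB (Q : ConsQFun X T₀ T₁) : Prop :=
  ∀ (x : X) (s : ℝ), T₀ < s → (s : EReal) < T₁ →
    (⨆ t ∈ Set.Ico T₀ s, Q.qp x t Set.univ) < ⊤

/-- Assumption (L1): `∫_{T₀}^s q(x,t) dt < ∞` for every `x` and `s ∈ (T₀,T₁)`. -/
def AssumptionL1 (Q : ConsQFun X T₀ T₁) : Prop :=
  ∀ (x : X) (s : ℝ), T₀ < s → (s : EReal) < T₁ →
    ∫⁻ t in Set.Ico T₀ s, Q.qp x t Set.univ < ⊤

/-- A set `B` is `(q,s)`-bounded if `q(x,t)` is bounded on `B × [T₀, s)`; for `s = T₁`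
this is the notion of a `q`-bounded set. -/
def QBddOn (Q : ConsQFun X T₀ T₁) (s : EReal) (B : Set X) : Prop :=
  ∃ C : ℝ≥0∞, C ≠ ⊤ ∧ ∀ x ∈ B, ∀ t : ℝ, T₀ ≤ t → (t : EReal) < s → Q.qp x t Set.univ ≤ C

/-- Feller's iterates: `P̄⁽⁰⁾(u,x;t,B) = 1{x∈B} e^{-∫_u^t q(x,s) ds}` and
`P̄⁽ⁿ⁾(u,x;t,B) = ∫_u^t ∫_X e^{-∫_u^w q(x,θ) dθ} P̄⁽ⁿ⁻¹⁾(w,y;t,B) q(x,w,dy∖{x}) dw`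
(the measure `q(x,w, ·∖{x})` is `Q.qp x w`, which has no atom at `x`). -/
def PbarN (Q : ConsQFun X T₀ T₁) : ℕ → ℝ → X → ℝ → Set X → ℝ≥0∞
  | 0 => fun u x t B =>
      B.indicator (fun _ => ENNReal.ofReal (Real.exp (-(∫ s in u..t, Q.qrate x s)))) x
  | n + 1 => fun u x t B =>
      ∫⁻ w in Set.Ioo u t,
        ∫⁻ y, ENNReal.ofReal (Real.exp (-(∫ θ in u..w, Q.qrate x θ))) * Q.PbarN n w y t B
          ∂(Q.qp x w)

/-- The transition function `P̄(u,x;t,B) = Σ_{n=0}^∞ P̄⁽ⁿ⁾(u,x;t,B)`. -/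
def Pbar (Q : ConsQFun X T₀ T₁) (u : ℝ) (x : X) (t : ℝ) (B : Set X) : ℝ≥0∞ :=
  ∑' n, Q.PbarN n u x t B

/-- `P̄` as a real-valued function. -/
def PbarR (Q : ConsQFun X T₀ T₁) (u : ℝ) (x : X) (t : ℝ) (B : Set X) : ℝ :=
  (Q.Pbar u x t B).toReal

end ConsQFun

/-- A real-valued function `f` is absolutely continuous on a set `s ⊆ ℝ`: for every `ε > 0`
there is `δ > 0` such that for every finite collection of nonoverlapping intervals
`(aᵢ, bᵢ)` with endpoints in `s` and total length `< δ`, `Σ |f(bᵢ) - f(aᵢ)| < ε`. -/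
def AbsContinuousOn (f : ℝ → ℝ) (s : Set ℝ) : Prop :=
  ∀ ε > (0 : ℝ), ∃ δ > (0 : ℝ), ∀ (n : ℕ) (a b : ℕ → ℝ),
    (∀ i, i < n → a i ∈ s ∧ b i ∈ s ∧ a i ≤ b i) →
    (∀ i, i < n → ∀ j, j < n → i ≠ j → Disjoint (Set.Ioo (a i) (b i)) (Set.Ioo (a j) (b j))) →
    (∑ i ∈ Finset.range n, (b i - a i)) < δ →
    (∑ i ∈ Finset.range n, |f (b i) - f (a i)|) < ε

namespace CQForward

open ProbabilityTheory MeasureTheory Set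

universe u

variable {X : Type u} [MeasurableSpace X] {T₀ : ℝ} {T₁ : EReal}

/-- The exponential factor `e^{-∫_u^t q(x,s) ds}` as an `ℝ≥0∞` number. -/
def CQE (Q : ConsQFun X T₀ T₁) (u : ℝ) (x : X) (t : ℝ) : ℝ≥0∞ :=
  ENNReal.ofReal (Real.exp (-(∫ s in u..t, Q.qrate x s)))

lemma CQE_ne_top (Q : ConsQFun X T₀ T₁) (u : ℝ) (x : X) (t : ℝ) : CQE Q u x t ≠ ⊤ :=
  ENNReal.ofReal_ne_top

instance qpFin (Q : ConsQFun X T₀ T₁) (x : X) (t : ℝ) : IsFiniteMeasure (Q.qp x t) :=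
  ⟨(Q.fin x t).lt_top⟩

lemma measurable_qrate (Q : ConsQFun X T₀ T₁) :
    Measurable fun p : X × ℝ => Q.qrate p.1 p.2 :=
  (Q.meas Set.univ MeasurableSet.univ).ennreal_toReal

lemma measurable_Iocint (Q : ConsQFun X T₀ T₁) :
    Measurable fun p : ℝ × X × ℝ => ∫ s in Set.Ioc p.1 p.2.2, Q.qrate p.2.1 s := by
  have key : ∀ p : ℝ × X × ℝ, ∫ s in Set.Ioc p.1 p.2.2, Q.qrate p.2.1 s
      = (∫⁻ s, (Set.Ioc p.1 p.2.2).indicator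
          (fun s => ENNReal.ofReal (Q.qrate p.2.1 s)) s).toReal := by
    intro p
    rw [lintegral_indicator measurableSet_Ioc]
    exact integral_eq_lintegral_of_nonneg_ae (ae_of_all _ fun s => ENNReal.toReal_nonneg)
      (Measurable.aestronglyMeasurable
        (by exact (measurable_qrate Q).comp (measurable_const.prodMk measurable_id)))
  simp_rw [key]
  have hF : Measurable fun q : (ℝ × X × ℝ) × ℝ =>
      (Set.Ioc q.1.1 q.1.2.2).indicator (fun s => ENNReal.ofReal (Q.qrate q.1.2.1 s)) q.2 := by
    have : ∀ q : (ℝ × X × ℝ) × ℝ,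
        (Set.Ioc q.1.1 q.1.2.2).indicator (fun s => ENNReal.ofReal (Q.qrate q.1.2.1 s)) q.2
        = if q.1.1 < q.2 ∧ q.2 ≤ q.1.2.2 then ENNReal.ofReal (Q.qrate q.1.2.1 q.2) else 0 := by
      intro q; rw [Set.indicator_apply]; simp [Set.mem_Ioc]
    simp_rw [this]
    refine Measurable.ite ?_ ?_ measurable_const
    · exact (measurableSet_lt measurable_fst.fst measurable_snd).inter
        (measurableSet_le measurable_snd measurable_fst.snd.snd)
    · exact ENNReal.measurable_ofReal.comp
        ((measurable_qrate Q).comp (measurable_fst.snd.fst.prodMk measurable_snd))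
  exact (Measurable.lintegral_prod_right' hF).ennreal_toReal

lemma measurable_CQE (Q : ConsQFun X T₀ T₁) :
    Measurable fun p : ℝ × X × ℝ => CQE Q p.1 p.2.1 p.2.2 := by
  unfold CQE intervalIntegral
  refine ENNReal.measurable_ofReal.comp (Real.measurable_exp.comp (Measurable.neg ?_))
  have hmap : Measurable fun p : ℝ × X × ℝ => ((p.2.2, p.2.1, p.1) : ℝ × X × ℝ) :=
    measurable_snd.snd.prodMk (measurable_snd.fst.prodMk measurable_fst)
  have h2 : Measurable fun p : ℝ × X × ℝ => ∫ s in Set.Ioc p.2.2 p.1, Q.qrate p.2.1 s := by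
    simpa [Function.comp_def] using (measurable_Iocint Q).comp hmap
  exact (measurable_Iocint Q).sub h2

/-- The jump kernel as a `Kernel`. -/
def Qk (Q : ConsQFun X T₀ T₁) : Kernel (X × ℝ) X :=
  ⟨fun p => Q.qp p.1 p.2, Measure.measurable_of_measurable_coe _ fun s hs => Q.meas s hs⟩

lemma Qk_apply (Q : ConsQFun X T₀ T₁) (p : X × ℝ) : Qk Q p = Q.qp p.1 p.2 := rfl

end CQForward
namespace CQForward

open ProbabilityTheory MeasureTheory Set

universe u

variable {X : Type u} [MeasurableSpace X] {T₀ : ℝ} {T₁ : EReal}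

/-- Slices of the jump kernel with bounded total mass. -/
def Qks (Q : ConsQFun X T₀ T₁) (n : ℕ) : Kernel (X × ℝ) X :=
  ⟨fun p => if Q.qp p.1 p.2 Set.univ ∈ Set.Ico (n : ℝ≥0∞) ((n : ℝ≥0∞) + 1)
      then Q.qp p.1 p.2 else 0, by
    apply Measure.measurable_of_measurable_coe
    intro s hs
    simp only [apply_ite (fun m : Measure X => m s), Measure.coe_zero, Pi.zero_apply]
    exact Measurable.ite ((Q.meas Set.univ MeasurableSet.univ) measurableSet_Ico)
      (Q.meas s hs) measurable_const⟩

lemma Qks_apply (Q : ConsQFun X T₀ T₁) (n : ℕ) (p : X × ℝ) :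
    Qks Q n p = if Q.qp p.1 p.2 Set.univ ∈ Set.Ico (n : ℝ≥0∞) ((n : ℝ≥0∞) + 1)
      then Q.qp p.1 p.2 else 0 := rfl

lemma mem_Ico_iff_floor (Q : ConsQFun X T₀ T₁) (p : X × ℝ) (i : ℕ) :
    Q.qp p.1 p.2 Set.univ ∈ Set.Ico (i : ℝ≥0∞) ((i : ℝ≥0∞) + 1)
      ↔ i = ⌊(Q.qp p.1 p.2 Set.univ).toReal⌋₊ := by
  have hfin := Q.fin p.1 p.2
  set m := Q.qp p.1 p.2 Set.univ with hm
  constructor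
  · rintro ⟨h1, h2⟩
    have h1' : (i : ℝ) ≤ m.toReal := by
      have := ENNReal.toReal_mono hfin h1
      simpa using this
    have h2' : m.toReal < (i : ℝ) + 1 := by
      have h3 : ((i : ℝ≥0∞) + 1) ≠ ⊤ := by simp
      have := (ENNReal.toReal_lt_toReal hfin h3).mpr h2
      simpa [ENNReal.toReal_add (by simp : (i : ℝ≥0∞) ≠ ⊤) ENNReal.one_ne_top] using this
    exact ((Nat.floor_eq_iff ENNReal.toReal_nonneg).mpr ⟨h1', h2'⟩).symm
  · rintro rfl
    constructor
    · have h1 : (↑⌊m.toReal⌋₊ : ℝ) ≤ m.toReal := Nat.floor_le ENNReal.toReal_nonneg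
      rw [← ENNReal.ofReal_natCast]
      exact ENNReal.ofReal_le_of_le_toReal h1
    · have h2 : m.toReal < (⌊m.toReal⌋₊ : ℝ) + 1 := Nat.lt_floor_add_one _
      calc m = ENNReal.ofReal m.toReal := (ENNReal.ofReal_toReal hfin).symm
        _ < ENNReal.ofReal ((⌊m.toReal⌋₊ : ℝ) + 1) :=
            (ENNReal.ofReal_lt_ofReal_iff (by positivity)).mpr h2
        _ = (⌊m.toReal⌋₊ : ℝ≥0∞) + 1 := by
            rw [ENNReal.ofReal_add (by positivity) zero_le_one, ENNReal.ofReal_one,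
              ENNReal.ofReal_natCast]

instance Qk_sfinite (Q : ConsQFun X T₀ T₁) : IsSFiniteKernel (Qk Q) := by
  refine ⟨⟨Qks Q, fun n => ?_, ?_⟩⟩
  · refine ⟨(n : ℝ≥0∞) + 1,
      ENNReal.add_lt_top.mpr ⟨ENNReal.natCast_lt_top n, ENNReal.one_lt_top⟩, fun p => ?_⟩
    rw [Qks_apply]
    split_ifs with h
    · exact h.2.le
    · simp
  · ext p s hs
    rw [Kernel.sum_apply' _ _ hs, Qk_apply]
    have hterm : ∀ i : ℕ, Qks Q i p s
        = if i = ⌊(Q.qp p.1 p.2 Set.univ).toReal⌋₊ then Q.qp p.1 p.2 s else 0 := by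
      intro i
      rw [Qks_apply]
      by_cases h : i = ⌊(Q.qp p.1 p.2 Set.univ).toReal⌋₊
      · rw [if_pos ((mem_Ico_iff_floor Q p i).mpr h), if_pos h]
      · rw [if_neg (fun hc => h ((mem_Ico_iff_floor Q p i).mp hc)), if_neg h]
        simp
    simp_rw [hterm]
    rw [tsum_ite_eq]

end CQForward
namespace CQForward

open ProbabilityTheory MeasureTheory Set

universe u v

variable {X : Type u} [MeasurableSpace X] {T₀ : ℝ} {T₁ : EReal}

lemma measurable_lintegral_qp (Q : ConsQFun X T₀ T₁) {α : Type v} [MeasurableSpace α]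
    {g : α → X × ℝ} (hg : Measurable g) {f : α → X → ℝ≥0∞}
    (hf : Measurable (Function.uncurry f)) :
    Measurable fun a => ∫⁻ y, f a y ∂ Q.qp (g a).1 (g a).2 := by
  have h := Measurable.lintegral_kernel_prod_right' (κ := (Qk Q).comap g hg)
    (f := Function.uncurry f) hf
  simpa [Kernel.comap_apply, Qk_apply, Function.uncurry] using h

/-- Feller's iterates as genuine measures. -/
def Pm (Q : ConsQFun X T₀ T₁) : ℕ → ℝ → X → ℝ → Measure X
  | 0 => fun u x t => CQE Q u x t • Measure.dirac x
  | n + 1 => fun u x t =>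
      (volume.restrict (Set.Ioo u t)).bind
        (fun w => CQE Q u x w • ((Q.qp x w).bind fun y => Pm Q n w y t))

lemma Pm_zero (Q : ConsQFun X T₀ T₁) (u : ℝ) (x : X) (t : ℝ) :
    Pm Q 0 u x t = CQE Q u x t • Measure.dirac x := rfl

lemma Pm_succ (Q : ConsQFun X T₀ T₁) (n : ℕ) (u : ℝ) (x : X) (t : ℝ) :
    Pm Q (n + 1) u x t = (volume.restrict (Set.Ioo u t)).bind
      (fun w => CQE Q u x w • ((Q.qp x w).bind fun y => Pm Q n w y t)) := rfl

lemma PbarN_zero (Q : ConsQFun X T₀ T₁) (u : ℝ) (x : X) (t : ℝ) (B : Set X) :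
    Q.PbarN 0 u x t B = B.indicator (fun _ => CQE Q u x t) x := rfl

lemma PbarN_succ (Q : ConsQFun X T₀ T₁) (n : ℕ) (u : ℝ) (x : X) (t : ℝ) (B : Set X) :
    Q.PbarN (n + 1) u x t B
      = ∫⁻ w in Set.Ioo u t, ∫⁻ y, CQE Q u x w * Q.PbarN n w y t B ∂ Q.qp x w := rfl

/-- The inner kernel in the recursive definition of `Pm` is a measurable family. -/
lemma measurable_PmK' (Q : ConsQFun X T₀ T₁) (n : ℕ)
    (hPm : Measurable fun p : ℝ × X × ℝ => Pm Q n p.1 p.2.1 p.2.2) (u : ℝ) (x : X) (t : ℝ) :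
    Measurable fun w : ℝ => CQE Q u x w • ((Q.qp x w).bind fun y => Pm Q n w y t) := by
  have hPmy : ∀ w : ℝ, Measurable fun y : X => Pm Q n w y t := by
    intro w
    have hmap : Measurable fun y : X => ((w, y, t) : ℝ × X × ℝ) :=
      measurable_const.prodMk (measurable_id.prodMk measurable_const)
    simpa [Function.comp_def] using hPm.comp hmap
  have hbind : Measurable fun w : ℝ => (Q.qp x w).bind fun y => Pm Q n w y t := by
    apply Measure.measurable_of_measurable_coe
    intro s hs
    have h1 : ∀ w : ℝ, ((Q.qp x w).bind fun y => Pm Q n w y t) s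
        = ∫⁻ y, Pm Q n w y t s ∂ Q.qp x w := fun w =>
      Measure.bind_apply hs (hPmy w).aemeasurable
    simp_rw [h1]
    have huncurry : Measurable (Function.uncurry fun (w : ℝ) (y : X) => Pm Q n w y t s) := by
      have hmap : Measurable fun q : ℝ × X => ((q.1, q.2, t) : ℝ × X × ℝ) :=
        measurable_fst.prodMk (measurable_snd.prodMk measurable_const)
      simpa [Function.comp_def, Function.uncurry_def] using
        ((Measure.measurable_coe hs).comp hPm).comp hmap
    exact measurable_lintegral_qp Q (g := fun w : ℝ => (x, w))
      (measurable_const.prodMk measurable_id) huncurry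
  apply Measure.measurable_of_measurable_coe
  intro s hs
  simp only [Measure.smul_apply, smul_eq_mul]
  have hc : Measurable fun w : ℝ => CQE Q u x w := by
    have hmap : Measurable fun w : ℝ => ((u, x, w) : ℝ × X × ℝ) :=
      measurable_const.prodMk (measurable_const.prodMk measurable_id)
    simpa [Function.comp_def] using (measurable_CQE Q).comp hmap
  exact hc.mul ((Measure.measurable_coe hs).comp hbind)

lemma lintegral_Pm_succ' (Q : ConsQFun X T₀ T₁) (n : ℕ)
    (hPm : Measurable fun p : ℝ × X × ℝ => Pm Q n p.1 p.2.1 p.2.2)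
    (u : ℝ) (x : X) (t : ℝ) {h : X → ℝ≥0∞} (hh : Measurable h) :
    ∫⁻ z, h z ∂ Pm Q (n + 1) u x t
      = ∫⁻ w in Set.Ioo u t, CQE Q u x w * ∫⁻ y, (∫⁻ z, h z ∂ Pm Q n w y t) ∂ Q.qp x w := by
  rw [Pm_succ, Measure.lintegral_bind (measurable_PmK' Q n hPm u x t).aemeasurable hh.aemeasurable]
  refine lintegral_congr fun w => ?_
  rw [lintegral_smul_measure, smul_eq_mul]
  congr 1
  refine Measure.lintegral_bind (Measurable.aemeasurable ?_) hh.aemeasurable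
  have hmap : Measurable fun y : X => ((w, y, t) : ℝ × X × ℝ) :=
    measurable_const.prodMk (measurable_id.prodMk measurable_const)
  simpa [Function.comp_def] using hPm.comp hmap

end CQForward
namespace CQForward

open ProbabilityTheory MeasureTheory Set

universe u v

variable {X : Type u} [MeasurableSpace X] {T₀ : ℝ} {T₁ : EReal}

/-- Joint measurability of parametrized lower integrals against the measures `Pm`. -/
lemma measurable_lintegral_Pm (Q : ConsQFun X T₀ T₁) (n : ℕ) :
    ∀ {α : Type u} [MeasurableSpace α] (g : α → ℝ × X × ℝ), Measurable g →
      ∀ (f : α → X → ℝ≥0∞), Measurable (Function.uncurry f) →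
        Measurable fun a => ∫⁻ z, f a z ∂ Pm Q n (g a).1 (g a).2.1 (g a).2.2 := by
  induction n with
  | zero =>
    intro α mα g hg f hf
    have key : ∀ a, ∫⁻ z, f a z ∂ Pm Q 0 (g a).1 (g a).2.1 (g a).2.2
        = CQE Q (g a).1 (g a).2.1 (g a).2.2 * f a (g a).2.1 := by
      intro a
      have hfa : Measurable (f a) := by
        simpa [Function.comp_def, Function.uncurry_def] using hf.comp (measurable_prodMk_left (x := a))
      rw [Pm_zero, lintegral_smul_measure, lintegral_dirac' _ hfa, smul_eq_mul]
    simp_rw [key]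
    have h1 : Measurable fun a => CQE Q (g a).1 (g a).2.1 (g a).2.2 := by
      simpa [Function.comp_def] using (measurable_CQE Q).comp hg
    have h2 : Measurable fun a => f a (g a).2.1 := by
      have hmap : Measurable fun a : α => (a, (g a).2.1) :=
        measurable_id.prodMk hg.snd.fst
      simpa [Function.comp_def, Function.uncurry_def] using hf.comp hmap
    exact h1.mul h2
  | succ n ih =>
    intro α mα g hg f hf
    have hPm : Measurable fun p : ℝ × X × ℝ => Pm Q n p.1 p.2.1 p.2.2 := by
      apply Measure.measurable_of_measurable_coe
      intro s hs
      have h := ih (fun p : ℝ × X × ℝ => p) measurable_id'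
        (fun _ z => s.indicator 1 z) ((measurable_one.indicator hs).comp measurable_snd)
      simpa [lintegral_indicator_one hs] using h
    have hrw : ∀ a, ∫⁻ z, f a z ∂ Pm Q (n + 1) (g a).1 (g a).2.1 (g a).2.2
        = ∫⁻ w, (if (g a).1 < w ∧ w < (g a).2.2 then
            CQE Q (g a).1 (g a).2.1 w
              * ∫⁻ y, (∫⁻ z, f a z ∂ Pm Q n w y (g a).2.2) ∂ Q.qp (g a).2.1 w
            else 0) := by
      intro a
      have hfa : Measurable (f a) := by
        simpa [Function.comp_def, Function.uncurry_def] using hf.comp (measurable_prodMk_left (x := a))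
      rw [lintegral_Pm_succ' Q n hPm _ _ _ hfa, ← lintegral_indicator measurableSet_Ioo]
      refine lintegral_congr fun w => ?_
      rw [Set.indicator_apply]
      simp [Set.mem_Ioo]
    simp_rw [hrw]
    have hinner : Measurable fun q : α × ℝ =>
        ∫⁻ y, (∫⁻ z, f q.1 z ∂ Pm Q n q.2 y (g q.1).2.2) ∂ Q.qp (g q.1).2.1 q.2 := by
      have hf2 : Measurable (Function.uncurry fun (q : α × ℝ) (y : X) =>
          ∫⁻ z, f q.1 z ∂ Pm Q n q.2 y (g q.1).2.2) := by
        have hg' : Measurable fun r : (α × ℝ) × X => ((r.1.2, r.2, (g r.1.1).2.2) : ℝ × X × ℝ) :=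
          measurable_fst.snd.prodMk (measurable_snd.prodMk ((hg.comp measurable_fst.fst).snd.snd))
        have hf' : Measurable (Function.uncurry fun (r : (α × ℝ) × X) (z : X) => f r.1.1 z) := by
          have hmap : Measurable fun q : ((α × ℝ) × X) × X => ((q.1.1.1, q.2) : α × X) :=
            measurable_fst.fst.fst.prodMk measurable_snd
          simpa [Function.comp_def, Function.uncurry_def] using hf.comp hmap
        have := ih (fun r : (α × ℝ) × X => (r.1.2, r.2, (g r.1.1).2.2)) hg'
          (fun (r : (α × ℝ) × X) (z : X) => f r.1.1 z) hf'
        simpa [Function.uncurry_def] using this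
      exact measurable_lintegral_qp Q
        (g := fun q : α × ℝ => ((g q.1).2.1, q.2))
        (((hg.comp measurable_fst).snd.fst).prodMk measurable_snd) hf2
    have hc : Measurable fun q : α × ℝ => CQE Q (g q.1).1 (g q.1).2.1 q.2 := by
      have hmap : Measurable fun q : α × ℝ => (((g q.1).1, (g q.1).2.1, q.2) : ℝ × X × ℝ) :=
        ((hg.comp measurable_fst).fst).prodMk
          (((hg.comp measurable_fst).snd.fst).prodMk measurable_snd)
      simpa [Function.comp_def] using (measurable_CQE Q).comp hmap
    have hset : MeasurableSet {q : α × ℝ | (g q.1).1 < q.2 ∧ q.2 < (g q.1).2.2} :=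
      (measurableSet_lt ((hg.comp measurable_fst).fst) measurable_snd).inter
        (measurableSet_lt measurable_snd ((hg.comp measurable_fst).snd.snd))
    have hF : Measurable fun q : α × ℝ => (if (g q.1).1 < q.2 ∧ q.2 < (g q.1).2.2 then
        CQE Q (g q.1).1 (g q.1).2.1 q.2
          * ∫⁻ y, (∫⁻ z, f q.1 z ∂ Pm Q n q.2 y (g q.1).2.2) ∂ Q.qp (g q.1).2.1 q.2
        else 0) := Measurable.ite hset (hc.mul hinner) measurable_const
    exact Measurable.lintegral_prod_right' hF

/-- Joint measurability of the measures `Pm`. -/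
lemma measurable_Pm (Q : ConsQFun X T₀ T₁) (n : ℕ) :
    Measurable fun p : ℝ × X × ℝ => Pm Q n p.1 p.2.1 p.2.2 := by
  apply Measure.measurable_of_measurable_coe
  intro s hs
  have h := measurable_lintegral_Pm Q n (fun p : ℝ × X × ℝ => p) measurable_id'
    (fun _ z => s.indicator 1 z) ((measurable_one.indicator hs).comp measurable_snd)
  simpa [lintegral_indicator_one hs] using h

lemma lintegral_Pm_succ (Q : ConsQFun X T₀ T₁) (n : ℕ)
    (u' : ℝ) (x : X) (t : ℝ) {h : X → ℝ≥0∞} (hh : Measurable h) :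
    ∫⁻ z, h z ∂ Pm Q (n + 1) u' x t
      = ∫⁻ w in Set.Ioo u' t, CQE Q u' x w * ∫⁻ y, (∫⁻ z, h z ∂ Pm Q n w y t) ∂ Q.qp x w :=
  lintegral_Pm_succ' Q n (measurable_Pm Q n) u' x t hh

end CQForward
namespace CQForward

open ProbabilityTheory MeasureTheory Set

universe u

variable {X : Type u} [MeasurableSpace X] {T₀ : ℝ} {T₁ : EReal}

lemma measurable_Pm_y (Q : ConsQFun X T₀ T₁) (n : ℕ) (w t : ℝ) :
    Measurable fun y : X => Pm Q n w y t := by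
  have hmap : Measurable fun y : X => ((w, y, t) : ℝ × X × ℝ) :=
    measurable_const.prodMk (measurable_id.prodMk measurable_const)
  simpa [Function.comp_def] using (measurable_Pm Q n).comp hmap

lemma Pm_apply (Q : ConsQFun X T₀ T₁) (n : ℕ) :
    ∀ (u : ℝ) (x : X) (t : ℝ) {B : Set X}, MeasurableSet B →
      Pm Q n u x t B = Q.PbarN n u x t B := by
  induction n with
  | zero =>
    intro u x t B hB
    rw [Pm_zero, PbarN_zero, Measure.smul_apply, smul_eq_mul, Measure.dirac_apply' _ hB]
    by_cases hx : x ∈ B <;> simp [hx]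
  | succ n ih =>
    intro u x t B hB
    rw [Pm_succ, Measure.bind_apply hB (measurable_PmK' Q n (measurable_Pm Q n) u x t).aemeasurable,
      PbarN_succ]
    refine lintegral_congr fun w => ?_
    rw [Measure.smul_apply, smul_eq_mul, Measure.bind_apply hB (measurable_Pm_y Q n w t).aemeasurable,
      lintegral_const_mul' _ _ (CQE_ne_top Q u x w)]
    congr 1
    exact lintegral_congr fun y => ih w y t hB

lemma lintegral_triangle (u t : ℝ) (F : ℝ → ℝ → ℝ≥0∞)
    (hF : Measurable (Function.uncurry F)) :
    ∫⁻ w in Set.Ioo u t, ∫⁻ s in Set.Ioo w t, F w s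
      = ∫⁻ s in Set.Ioo u t, ∫⁻ w in Set.Ioo u s, F w s := by
  have hrw1 : ∫⁻ w in Set.Ioo u t, ∫⁻ s in Set.Ioo w t, F w s
      = ∫⁻ w, ∫⁻ s, (if u < w ∧ w < s ∧ s < t then F w s else 0) := by
    rw [← lintegral_indicator measurableSet_Ioo]
    refine lintegral_congr fun w => ?_
    rw [Set.indicator_apply]
    split_ifs with h
    · rw [← lintegral_indicator measurableSet_Ioo]
      refine lintegral_congr fun s => ?_
      rw [Set.indicator_apply]
      simp only [Set.mem_Ioo] at h ⊢
      by_cases h2 : w < s ∧ s < t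
      · rw [if_pos h2, if_pos ⟨h.1, h2⟩]
      · rw [if_neg h2, if_neg fun hc => h2 ⟨hc.2.1, hc.2.2⟩]
    · simp only [Set.mem_Ioo] at h
      have hz : ∀ s : ℝ, (if u < w ∧ w < s ∧ s < t then F w s else 0) = 0 := fun s =>
        if_neg fun hc => h ⟨hc.1, hc.2.1.trans hc.2.2⟩
      rw [lintegral_congr hz, lintegral_zero]
  have hrw2 : ∫⁻ s in Set.Ioo u t, ∫⁻ w in Set.Ioo u s, F w s
      = ∫⁻ s, ∫⁻ w, (if u < w ∧ w < s ∧ s < t then F w s else 0) := by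
    rw [← lintegral_indicator measurableSet_Ioo]
    refine lintegral_congr fun s => ?_
    rw [Set.indicator_apply]
    split_ifs with h
    · rw [← lintegral_indicator measurableSet_Ioo]
      refine lintegral_congr fun w => ?_
      rw [Set.indicator_apply]
      simp only [Set.mem_Ioo] at h ⊢
      by_cases h2 : u < w ∧ w < s
      · rw [if_pos h2, if_pos ⟨h2.1, h2.2, h.2⟩]
      · rw [if_neg h2, if_neg fun hc => h2 ⟨hc.1, hc.2.1⟩]
    · simp only [Set.mem_Ioo] at h
      have hz : ∀ w : ℝ, (if u < w ∧ w < s ∧ s < t then F w s else 0) = 0 := fun w =>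
        if_neg fun hc => h ⟨hc.1.trans hc.2.1, hc.2.2⟩
      rw [lintegral_congr hz, lintegral_zero]
  rw [hrw1, hrw2]
  have hΦ : Measurable fun q : ℝ × ℝ => (if u < q.1 ∧ q.1 < q.2 ∧ q.2 < t then F q.1 q.2 else 0) := by
    refine Measurable.ite ?_ hF measurable_const
    exact (measurableSet_lt measurable_const measurable_fst).inter
      ((measurableSet_lt measurable_fst measurable_snd).inter
        (measurableSet_lt measurable_snd measurable_const))
  exact lintegral_lintegral_swap hΦ.aemeasurable

end CQForward
namespace CQForward

open ProbabilityTheory MeasureTheory Set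

universe u

variable {X : Type u} [MeasurableSpace X] {T₀ : ℝ} {T₁ : EReal}

/-- The integrand of the forward recursion:
`Gker Q B t s z = ∫_B e^{-∫_s^t q(y,θ)dθ} q(z,s,dy)`. -/
def Gker (Q : ConsQFun X T₀ T₁) (B : Set X) (t s : ℝ) (z : X) : ℝ≥0∞ :=
  ∫⁻ y in B, CQE Q s y t ∂ Q.qp z s

lemma measurable_Gker (Q : ConsQFun X T₀ T₁) {B : Set X} (hB : MeasurableSet B) (t : ℝ) :
    Measurable fun q : X × ℝ => Gker Q B t q.2 q.1 := by
  have hf : Measurable (Function.uncurry fun (q : X × ℝ) (y : X) => CQE Q q.2 y t) := by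
    have hmap : Measurable fun r : (X × ℝ) × X => ((r.1.2, r.2, t) : ℝ × X × ℝ) :=
      measurable_fst.snd.prodMk (measurable_snd.prodMk measurable_const)
    simpa [Function.comp_def, Function.uncurry_def] using (measurable_CQE Q).comp hmap
  have h := Measurable.setLIntegral_kernel_prod_right (κ := Qk Q)
    (f := fun (q : X × ℝ) (y : X) => CQE Q q.2 y t) hf hB
  simpa [Qk_apply, Gker] using h

lemma measurable_Gker_z (Q : ConsQFun X T₀ T₁) {B : Set X} (hB : MeasurableSet B) (t s : ℝ) :
    Measurable fun z : X => Gker Q B t s z := by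
  have hmap : Measurable fun z : X => ((z, s) : X × ℝ) :=
    measurable_id.prodMk measurable_const
  simpa [Function.comp_def] using (measurable_Gker Q hB t).comp hmap

lemma measurable_Hfun (Q : ConsQFun X T₀ T₁) {B : Set X} (hB : MeasurableSet B) (t : ℝ) (n : ℕ) :
    Measurable fun p : ℝ × X × ℝ => ∫⁻ z, Gker Q B t p.2.2 z ∂ Pm Q n p.1 p.2.1 p.2.2 := by
  have hf : Measurable (Function.uncurry
      fun (p : ℝ × X × ℝ) (z : X) => Gker Q B t p.2.2 z) := by
    have hmap : Measurable fun r : (ℝ × X × ℝ) × X => ((r.2, r.1.2.2) : X × ℝ) :=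
      measurable_snd.prodMk measurable_fst.snd.snd
    simpa [Function.comp_def, Function.uncurry_def] using (measurable_Gker Q hB t).comp hmap
  exact measurable_lintegral_Pm Q n (fun p : ℝ × X × ℝ => p) measurable_id'
    (fun p z => Gker Q B t p.2.2 z) hf

/-- The forward form of Feller's recursion, with the `(n-1)`-st iterate as the measure `Pm`. -/
lemma Pm_forward (Q : ConsQFun X T₀ T₁) {B : Set X} (hB : MeasurableSet B) (t : ℝ) (n : ℕ) :
    ∀ (u : ℝ) (x : X), Q.PbarN (n + 1) u x t B
      = ∫⁻ w in Set.Ioo u t, ∫⁻ z, Gker Q B t w z ∂ Pm Q n u x w := by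
  induction n with
  | zero =>
    intro u x
    rw [PbarN_succ]
    refine lintegral_congr fun w => ?_
    rw [Pm_zero, lintegral_smul_measure, lintegral_dirac' _ (measurable_Gker_z Q hB t w), smul_eq_mul,
      lintegral_const_mul' _ _ (CQE_ne_top Q u x w)]
    congr 1
    rw [show Gker Q B t w x = ∫⁻ y in B, CQE Q w y t ∂ Q.qp x w from rfl,
      ← lintegral_indicator hB]
    refine lintegral_congr fun y => ?_
    rw [PbarN_zero]
    by_cases hy : y ∈ B <;> simp [hy]
  | succ n ih =>
    intro u x
    have hH := measurable_Hfun Q hB t n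
    -- step A: rewrite the inner integral for each w
    have stepA : ∀ w : ℝ, ∫⁻ y, CQE Q u x w * Q.PbarN (n + 1) w y t B ∂ Q.qp x w
        = ∫⁻ s in Set.Ioo w t,
            (CQE Q u x w * ∫⁻ y, (∫⁻ z, Gker Q B t s z ∂ Pm Q n w y s) ∂ Q.qp x w) := by
      intro w
      rw [lintegral_const_mul' _ _ (CQE_ne_top Q u x w)]
      have hih : ∫⁻ y, Q.PbarN (n + 1) w y t B ∂ Q.qp x w
          = ∫⁻ y, (∫⁻ s in Set.Ioo w t, ∫⁻ z, Gker Q B t s z ∂ Pm Q n w y s) ∂ Q.qp x w :=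
        lintegral_congr fun y => ih w y
      rw [hih]
      have hswap : ∫⁻ y, (∫⁻ s in Set.Ioo w t, ∫⁻ z, Gker Q B t s z ∂ Pm Q n w y s) ∂ Q.qp x w
          = ∫⁻ s in Set.Ioo w t, ∫⁻ y, (∫⁻ z, Gker Q B t s z ∂ Pm Q n w y s) ∂ Q.qp x w := by
        refine lintegral_lintegral_swap ?_
        have hmap : Measurable fun q : X × ℝ => ((w, q.1, q.2) : ℝ × X × ℝ) :=
          measurable_const.prodMk (measurable_fst.prodMk measurable_snd)
        exact (Measurable.aemeasurable (by
          simpa [Function.comp_def, Function.uncurry_def] using hH.comp hmap))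
      rw [hswap, ← lintegral_const_mul' _ _ (CQE_ne_top Q u x w)]
    rw [PbarN_succ]
    rw [lintegral_congr stepA]
    -- step B: triangle swap
    have hK : Measurable (Function.uncurry fun (w s : ℝ) =>
        ∫⁻ y, (∫⁻ z, Gker Q B t s z ∂ Pm Q n w y s) ∂ Q.qp x w) := by
      have hf2 : Measurable (Function.uncurry fun (q : ℝ × ℝ) (y : X) =>
          ∫⁻ z, Gker Q B t q.2 z ∂ Pm Q n q.1 y q.2) := by
        have hmap : Measurable fun r : (ℝ × ℝ) × X => ((r.1.1, r.2, r.1.2) : ℝ × X × ℝ) :=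
          measurable_fst.fst.prodMk (measurable_snd.prodMk measurable_fst.snd)
        simpa [Function.comp_def, Function.uncurry_def] using hH.comp hmap
      have h := measurable_lintegral_qp Q (g := fun q : ℝ × ℝ => ((x, q.1) : X × ℝ))
        (measurable_const.prodMk measurable_fst) hf2
      simpa [Function.uncurry_def] using h
    have hFm : Measurable (Function.uncurry fun (w s : ℝ) =>
        CQE Q u x w * ∫⁻ y, (∫⁻ z, Gker Q B t s z ∂ Pm Q n w y s) ∂ Q.qp x w) := by
      have hc : Measurable fun q : ℝ × ℝ => CQE Q u x q.1 := by
        have hmap : Measurable fun q : ℝ × ℝ => ((u, x, q.1) : ℝ × X × ℝ) :=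
          measurable_const.prodMk (measurable_const.prodMk measurable_fst)
        simpa [Function.comp_def] using (measurable_CQE Q).comp hmap
      exact hc.mul hK
    rw [lintegral_triangle u t _ hFm]
    -- step C: recognize the inner integral as an integral against `Pm (n+1)`
    refine lintegral_congr fun s => ?_
    exact (lintegral_Pm_succ Q n u x s (measurable_Gker_z Q hB t s)).symm
end CQForward
/-- forward form of Feller's recursion: under Assumption L1, for every
`n ≥ 1` the iterates `P̄⁽ⁿ⁾`, defined by the backward recursion, also satisfy the forward
recursion `P̄⁽ⁿ⁾(u,x;t,B) = ∫_u^t ∫_X ∫_B e^{-∫_w^t q(y,θ)dθ} q(z,w,dy∖{z})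
P̄⁽ⁿ⁻¹⁾(u,x;w,dz) dw`.  The integration with respect to the measure `P̄⁽ⁿ⁻¹⁾(u,x;w,·)` is
expressed by integrating against any measure `μ w` agreeing with `P̄⁽ⁿ⁻¹⁾(u,x;w,·)` on
Borel sets. -/
theorem pbarN_forward_recursion
    {X : Type*} [MeasurableSpace X] [StandardBorelSpace X]
    {T₀ : ℝ} {T₁ : EReal} (hT : (T₀ : EReal) < T₁)
    (Q : ConsQFun X T₀ T₁) (hL1 : Q.AssumptionL1)
    (n : ℕ) (u t : ℝ) (x : X) (B : Set X)
    (hu : T₀ ≤ u) (hut : u < t) (ht : (t : EReal) < T₁) (hB : MeasurableSet B)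
    (μ : ℝ → Measure X)
    (hμ : ∀ w, u < w → w < t → ∀ C : Set X, MeasurableSet C → μ w C = Q.PbarN n u x w C) :
    Q.PbarN (n + 1) u x t B =
      ∫⁻ w in Set.Ioo u t,
        ∫⁻ z, (∫⁻ y in B, ENNReal.ofReal (Real.exp (-(∫ θ in w..t, Q.qrate y θ)))
          ∂(Q.qp z w)) ∂(μ w) := by
  refine (CQForward.Pm_forward Q hB t n u x).trans ?_
  refine setLIntegral_congr_fun_ae measurableSet_Ioo (ae_of_all _ fun w hw => ?_)
  have hμw : μ w = CQForward.Pm Q n u x w :=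
    Measure.ext fun C hC => by
      rw [hμ w hw.1 hw.2 C hC, CQForward.Pm_apply Q n u x w hC]
  rw [hμw]
  rfl
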